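/- The Kronecker sum (componentwise XOR analogue of the Kronecker product over GF(2)) of the j-r vectors (η_r,0), (η_{r+1},0), ..., (η_{j-1},0), where each η_k ∈ {0,1}, produces a binary vector of length 2^{j-r}; as the η_k range over all choices with η_k = 0 forced whenever v[k+1] = 0, the number of distinct resulting vectors is exactly 2^{W_v}, where W_v is the number of indices k with v[k+1] = 1. -/

import Mathlib

/-- Kronecker sum over GF(2): like the Kronecker product but with addition in place of
multiplication; entry at position `(i-1)q + m` is `a[i] + b[m]`. -/
def kronSum {p q : ℕ} (a : Fin p → ZMod 2) (b : Fin q → ZMod 2) : Fin (p * q) → ZMod 2 :=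
  fun x => a (finProdFinEquiv.symm x).1 + b (finProdFinEquiv.symm x).2

/-- Iterated Kronecker sum `(η_0, 0) ⊞ (η_1, 0) ⊞ ⋯ ⊞ (η_{t-1}, 0)`,
a binary vector of length `2^t`. -/
def iterKron : (t : ℕ) → (Fin t → ZMod 2) → (Fin (2 ^ t) → ZMod 2)
  | 0, _ => fun _ => 0
  | t + 1, η => fun x =>
      kronSum (fun i : Fin 2 => if i = 0 then η 0 else 0)
        (iterKron t (fun k => η k.succ)) (Fin.cast (by ring) x)

lemma iterKron_succ (t : ℕ) (η : Fin (t+1) → ZMod 2) (x : Fin (2^(t+1))) :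
    iterKron (t+1) η x = (if (x : ℕ) < 2^t then η 0 else 0)
      + iterKron t (fun k => η k.succ) ⟨(x : ℕ) % 2^t, Nat.mod_lt _ (Nat.two_pow_pos t)⟩ := by
  simp only [iterKron, kronSum, finProdFinEquiv_symm_apply]
  congr 1
  rcases Nat.lt_or_ge (x : ℕ) (2^t) with h | h
  · rw [if_pos h, if_pos (Fin.ext (by simp [Fin.coe_divNat, Nat.div_eq_of_lt h]))]
  · rw [if_neg (not_lt.2 h), if_neg]
    intro hc
    have := congrArg Fin.val hc
    rw [Fin.coe_divNat] at this
    simp only [Fin.val_zero] at this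
    have hp := Nat.div_pos h (Nat.two_pow_pos t)
    exact hp.ne' this

lemma iterKron_injective : ∀ t, Function.Injective (iterKron t) := by
  intro t
  induction t with
  | zero => intro η η' _; funext k; exact absurd k.2 (by omega)
  | succ t ih =>
    intro η η' h
    have hpow : 0 < 2^t := Nat.two_pow_pos t
    have htail : iterKron t (fun k => η k.succ) = iterKron t (fun k => η' k.succ) := by
      funext m
      have hx : 2^t + (m : ℕ) < 2^(t+1) := by
        have := m.2; rw [pow_succ]; omega
      have := congrFun h ⟨2^t + (m : ℕ), hx⟩
      rw [iterKron_succ, iterKron_succ] at this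
      simp only [if_neg (by omega : ¬ (2^t + (m:ℕ) < 2^t)), zero_add] at this
      have hm : (2^t + (m : ℕ)) % 2^t = (m : ℕ) := by
        rw [Nat.add_mod_left]; exact Nat.mod_eq_of_lt m.2
      convert this using 2 <;> exact (Fin.ext hm.symm)
    have htail' := ih htail
    have h0 : η 0 = η' 0 := by
      have := congrFun h ⟨0, Nat.two_pow_pos (t+1)⟩
      rw [iterKron_succ, iterKron_succ] at this
      simp only [if_pos hpow] at this
      rw [htail'] at this
      exact add_right_cancel this
    funext k
    refine Fin.cases h0 (fun i => ?_) k
    exact congrFun htail' i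

/-- As the `η_k` range over all binary choices with `η_k = 0` forced whenever `v[k] = 0`,
the number of distinct repetition sequences
`(η_0,0) ⊞ ⋯ ⊞ (η_{t-1},0)` is exactly `2^{W_v}`, where `W_v` counts the ones of `v`. -/
theorem card_repetition_sequences {t : ℕ} (v : Fin t → ZMod 2) :
    (((Finset.univ : Finset (Fin t → ZMod 2)).filter
        (fun η => ∀ k, v k = 0 → η k = 0)).image (iterKron t)).card
      = 2 ^ ((Finset.univ : Finset (Fin t)).filter (fun k => v k = 1)).card := by
  rw [Finset.card_image_of_injective _ (iterKron_injective t)]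
  set S := (Finset.univ : Finset (Fin t)).filter (fun k => v k = 1) with hS
  have hdicho : ∀ a : ZMod 2, a = 0 ∨ a = 1 := by decide
  have : ((Finset.univ : Finset (Fin t → ZMod 2)).filter
      (fun η => ∀ k, v k = 0 → η k = 0)).card = (Finset.univ : Finset (↥S → ZMod 2)).card := by
    refine Finset.card_bij' (fun η _ => fun k : ↥S => η k.1)
      (fun g _ => fun k => if h : k ∈ S then g ⟨k, h⟩ else 0) ?_ ?_ ?_ ?_
    case refine_1 => intro η hη; simp
    case refine_2 =>
      intro g hg
      simp only [Finset.mem_filter, Finset.mem_univ, true_and]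
      intro k hk
      rw [dif_neg]
      rw [hS, Finset.mem_filter]
      rintro ⟨-, h1⟩
      rw [hk] at h1
      exact absurd h1 (by decide)
    case refine_3 =>
      intro g hg
      funext k
      by_cases h : k ∈ S
      · simp only [dif_pos h]
      · simp only [dif_neg h]
        simp only [Finset.mem_filter, Finset.mem_univ, true_and] at hg
        refine (hg k ?_).symm
        rcases hdicho (v k) with h0 | h1
        · exact h0
        · exact absurd (by simp [hS, h1]) h
    case refine_4 =>
      intro g hg
      funext k
      simp only [dif_pos k.2]
  rw [this]
  rw [Finset.card_univ, Fintype.card_fun, ZMod.card, Fintype.card_coe]
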